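/- Let V be a finite set of vertices, 𝒱 a finite set of states, and F a finite family of subsets a ⊆ V with nonnegative factor functions Ψ_a depending only on coordinates in a. Suppose p : (V → 𝒱) → ℝ is given by p(x) = (1/Z) Π_{a∈F} Ψ_a(x_a) with Z = Σ_x Π_a Ψ_a(x_a) > 0. Let G be the simple graph on V connecting every pair of distinct vertices that appear together in some scope a ∈ F, and let N(s) be the neighbors of s in G. Then for any vertex s and any two configurations x, x' that agree on {s} ∪ N(s) and for which the conditionals are defined, p(x_s | x_{V∖{s}}) = p(x'_s | x'_{V∖{s}}); that is, the conditional distribution of X_s given all other variables depends only on the values of its neighbors. -/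

import Mathlib

/-- **Factorization implies the local Markov property.**  If `p` is given by a
normalized product of nonnegative local factors, then the conditional
distribution of the variable at `s` given all other variables depends only on
the values at `s` and its neighbors (vertices sharing a scope with `s`). -/
theorem factorization_implies_markov
    (V 𝒱 : Type) [Fintype V] [DecidableEq V] [Fintype 𝒱] [DecidableEq 𝒱]
    (F : Finset (Finset V)) (Ψ : Finset V → (V → 𝒱) → ℝ)
    (hnn : ∀ a ∈ F, ∀ x, 0 ≤ Ψ a x)
    (hlocal : ∀ a ∈ F, ∀ x y : V → 𝒱, (∀ v ∈ a, x v = y v) → Ψ a x = Ψ a y)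
    (Z : ℝ) (hZ : Z = ∑ z : V → 𝒱, ∏ a ∈ F, Ψ a z) (hZpos : 0 < Z)
    (p : (V → 𝒱) → ℝ) (hp : ∀ x, p x = (∏ a ∈ F, Ψ a x) / Z)
    (s : V) (x x' : V → 𝒱)
    -- `x` and `x'` agree on `{s} ∪ N(s)`, where `t ∈ N(s)` iff `t ≠ s` and
    -- `s, t` appear together in some scope `a ∈ F`
    (hagree_s : x s = x' s)
    (hagree_N : ∀ t : V, t ≠ s → (∃ a ∈ F, s ∈ a ∧ t ∈ a) → x t = x' t)
    -- the conditionals are defined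
    (hden : 0 < ∑ z : V → 𝒱, if (∀ v : V, v ≠ s → z v = x v) then p z else 0)
    (hden' : 0 < ∑ z : V → 𝒱, if (∀ v : V, v ≠ s → z v = x' v) then p z else 0) :
    p x / (∑ z : V → 𝒱, if (∀ v : V, v ≠ s → z v = x v) then p z else 0)
      = p x' / (∑ z : V → 𝒱, if (∀ v : V, v ≠ s → z v = x' v) then p z else 0) := by
  classical
  -- split the product into factors whose scope contains `s` and the rest
  have split : ∀ (y z : V → 𝒱), (∀ v, v ≠ s → z v = y v) →
      (∏ a ∈ F, Ψ a z)
        = (∏ a ∈ F.filter (fun a => s ∈ a), Ψ a (Function.update y s (z s)))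
          * ∏ a ∈ F.filter (fun a => ¬ s ∈ a), Ψ a y := by
    intro y z hz
    rw [← Finset.prod_filter_mul_prod_filter_not F (fun a => s ∈ a)]
    congr 1
    · refine Finset.prod_congr rfl ?_
      intro a ha
      simp only [Finset.mem_filter] at ha
      refine hlocal a ha.1 _ _ ?_
      intro t ht
      by_cases h : t = s
      · subst h; simp
      · rw [Function.update_of_ne h]; exact hz t h
    · refine Finset.prod_congr rfl ?_
      intro a ha
      simp only [Finset.mem_filter] at ha
      refine hlocal a ha.1 _ _ ?_
      intro t ht
      exact hz t (fun he => ha.2 (he ▸ ht))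
  -- the factors containing `s` agree for `x` and `x'`
  have hupd : ∀ v : 𝒱, ∀ a ∈ F, s ∈ a →
      Ψ a (Function.update x s v) = Ψ a (Function.update x' s v) := by
    intro v a ha hsa
    refine hlocal a ha _ _ ?_
    intro t ht
    by_cases h : t = s
    · subst h; simp
    · rw [Function.update_of_ne h, Function.update_of_ne h]
      exact hagree_N t h ⟨a, ha, hsa, ht⟩
  -- rewrite the denominator sums as sums over the value at `s`
  have sum_eq : ∀ y : V → 𝒱,
      (∑ z : V → 𝒱, if (∀ v : V, v ≠ s → z v = y v) then p z else 0)
        = ∑ v : 𝒱, p (Function.update y s v) := by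
    intro y
    rw [← Finset.sum_filter]
    refine Finset.sum_nbij' (fun z => z s) (fun v => Function.update y s v)
      ?_ ?_ ?_ ?_ ?_
    · intro a _; exact Finset.mem_univ _
    · intro v _
      simp only [Finset.mem_filter, Finset.mem_univ, true_and]
      intro t ht; rw [Function.update_of_ne ht]
    · intro z hz
      simp only [Finset.mem_filter, Finset.mem_univ, true_and] at hz
      funext t
      by_cases h : t = s
      · subst h; simp
      · show Function.update y s (z s) t = z t
        rw [Function.update_of_ne h]; exact (hz t h).symm
    · intro v _; simp
    · intro z hz
      simp only [Finset.mem_filter, Finset.mem_univ, true_and] at hz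
      congr 1
      funext t
      by_cases h : t = s
      · subst h; simp
      · rw [Function.update_of_ne h]; exact hz t h
  set A : 𝒱 → ℝ := fun v => ∏ a ∈ F.filter (fun a => s ∈ a), Ψ a (Function.update x s v)
    with hAdef
  set B : ℝ := ∏ a ∈ F.filter (fun a => ¬ s ∈ a), Ψ a x with hBdef
  set B' : ℝ := ∏ a ∈ F.filter (fun a => ¬ s ∈ a), Ψ a x' with hB'def
  have hA' : ∀ v : 𝒱,
      (∏ a ∈ F.filter (fun a => s ∈ a), Ψ a (Function.update x' s v)) = A v := by
    intro v
    refine Finset.prod_congr rfl ?_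
    intro a ha
    simp only [Finset.mem_filter] at ha
    exact (hupd v a ha.1 ha.2).symm
  have hpx : p x = A (x s) * B / Z := by
    rw [hp]
    rw [split x x (fun v _ => rfl)]
  have hpx' : p x' = A (x s) * B' / Z := by
    rw [hp]
    rw [split x' x' (fun v _ => rfl), hA' (x' s), ← hagree_s]
  have hsum : (∑ z : V → 𝒱, if (∀ v : V, v ≠ s → z v = x v) then p z else 0)
      = (∑ v : 𝒱, A v) * B / Z := by
    rw [sum_eq x, Finset.sum_mul, Finset.sum_div]
    refine Finset.sum_congr rfl ?_
    intro v _
    rw [hp]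
    have := split x (Function.update x s v)
      (fun t ht => Function.update_of_ne ht _ _)
    rw [this]
    simp [hAdef, hBdef]
  have hsum' : (∑ z : V → 𝒱, if (∀ v : V, v ≠ s → z v = x' v) then p z else 0)
      = (∑ v : 𝒱, A v) * B' / Z := by
    rw [sum_eq x', Finset.sum_mul, Finset.sum_div]
    refine Finset.sum_congr rfl ?_
    intro v _
    rw [hp]
    have := split x' (Function.update x' s v)
      (fun t ht => Function.update_of_ne ht _ _)
    rw [this]
    simp only [Function.update_self]
    rw [hA' v]
  -- nonnegativity
  have hAnn : ∀ v, 0 ≤ A v := fun v =>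
    Finset.prod_nonneg fun a ha => hnn a (Finset.mem_filter.mp ha).1 _
  have hBnn : 0 ≤ B :=
    Finset.prod_nonneg fun a ha => hnn a (Finset.mem_filter.mp ha).1 _
  have hB'nn : 0 ≤ B' :=
    Finset.prod_nonneg fun a ha => hnn a (Finset.mem_filter.mp ha).1 _
  have hSnn : 0 ≤ ∑ v : 𝒱, A v := Finset.sum_nonneg fun v _ => hAnn v
  rw [hsum] at hden
  rw [hsum'] at hden'
  have hBpos : 0 < B := by
    rcases hBnn.lt_or_eq with h | h
    · exact h
    · exfalso; rw [← h] at hden; simp at hden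
  have hB'pos : 0 < B' := by
    rcases hB'nn.lt_or_eq with h | h
    · exact h
    · exfalso; rw [← h] at hden'; simp at hden'
  have hSpos : 0 < ∑ v : 𝒱, A v := by
    rcases hSnn.lt_or_eq with h | h
    · exact h
    · exfalso; rw [← h] at hden; simp at hden
  rw [hpx, hpx', hsum, hsum']
  field_simp
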